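/- Let D and T be random variables on a common probability space taking values in finite sets, with p(T=t)>0 for every t in the range of T. Let x* be a fixed value with p(D=x*)>0, and suppose p(T=t | D=x*) > 0 whenever p(T=t) > 0. Then E_{(D,T)}[ log( p(T | D) / p(T) ) ] − E_{T}[ log( p(T | D=x*) / p(T) ) ] = E_{D}[ KL( p(T=· | D) ‖ p(T=· | D=x*) ) ] ≥ 0, where the first expectation is over the joint law of (D,T), the second over the marginal law of T, and the third over the marginal law of D. In other words, the expected PMI score of truthful reporting is at least the expected PMI score of the strategic curation method that always reports the fixed dataset x*. -/
import Mathlib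


open Finset
open scoped Classical

/-- Probability of an event under a pmf on a finite sample space. -/
noncomputable def pr {Ω : Type*} [Fintype Ω] (p : Ω → ℝ) (E : Ω → Prop) : ℝ :=
  ∑ ω, if E ω then p ω else 0

/-- Conditional probability `p(E | F)`. -/
noncomputable def cpr {Ω : Type*} [Fintype Ω] (p : Ω → ℝ) (E F : Ω → Prop) : ℝ :=
  pr p (fun ω => E ω ∧ F ω) / pr p F

/-- KL divergence between two pmfs on a finite set. -/
noncomputable def klD {A : Type*} [Fintype A] (q r : A → ℝ) : ℝ :=
  ∑ w, if 0 < q w then q w * Real.log (q w / r w) else 0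

lemma pr_nonneg' {Ω : Type*} [Fintype Ω] {p : Ω → ℝ} (hp : ∀ ω, 0 ≤ p ω) (E : Ω → Prop) :
    0 ≤ pr p E :=
  Finset.sum_nonneg fun ω _ => by by_cases h : E ω <;> simp [h, hp ω]

lemma pr_mono' {Ω : Type*} [Fintype Ω] {p : Ω → ℝ} (hp : ∀ ω, 0 ≤ p ω) (E F : Ω → Prop) :
    pr p (fun ω => E ω ∧ F ω) ≤ pr p E := by
  refine Finset.sum_le_sum fun ω _ => ?_
  by_cases h1 : E ω <;> by_cases h2 : F ω <;> simp [h1, h2, hp ω]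

lemma gibbs' {A : Type*} [Fintype A] (q r : A → ℝ) (hq : ∀ a, 0 ≤ q a) (hr : ∀ a, 0 ≤ r a)
    (hqs : ∑ a, q a = 1) (hrs : ∑ a, r a ≤ 1)
    (hab : ∀ a, 0 < q a → 0 < r a) : 0 ≤ klD q r := by
  have key : ∀ a ∈ Finset.univ, (if 0 < q a then q a - r a else 0) ≤
      (if 0 < q a then q a * Real.log (q a / r a) else 0) := by
    intro a _
    by_cases h : 0 < q a
    · rw [if_pos h, if_pos h]
      have hra := hab a h
      have hlog : Real.log (r a / q a) ≤ r a / q a - 1 :=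
        Real.log_le_sub_one_of_pos (div_pos hra h)
      have hneg : Real.log (q a / r a) = - Real.log (r a / q a) := by
        rw [← Real.log_inv, inv_div]
      rw [hneg]
      have h2 := mul_le_mul_of_nonneg_left hlog h.le
      have hdiv : q a * (r a / q a - 1) = r a - q a := by field_simp
      nlinarith
    · simp [h]
  have h2 : 0 ≤ ∑ a, (if 0 < q a then q a - r a else 0) := by
    have e1 : ∑ a, (if 0 < q a then q a else 0) = 1 := by
      rw [← hqs]
      refine Finset.sum_congr rfl fun a _ => ?_
      by_cases h : 0 < q a
      · rw [if_pos h]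
      · rw [if_neg h]
        exact (le_antisymm (not_lt.mp h) (hq a)).symm
    have e2 : ∑ a, (if 0 < q a then r a else 0) ≤ 1 := by
      refine le_trans (Finset.sum_le_sum fun a _ => ?_) hrs
      by_cases h : 0 < q a <;> simp [h, hr a]
    have e3 : ∑ a, (if 0 < q a then q a - r a else 0)
        = ∑ a, (if 0 < q a then q a else 0) - ∑ a, (if 0 < q a then r a else 0) := by
      rw [← Finset.sum_sub_distrib]
      refine Finset.sum_congr rfl fun a _ => ?_
      by_cases h : 0 < q a <;> simp [h]
    rw [e3, e1]; linarith
  calc (0:ℝ) ≤ ∑ a, (if 0 < q a then q a - r a else 0) := h2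
    _ ≤ klD q r := by unfold klD; exact Finset.sum_le_sum key

theorem stmt14 {Ω A B : Type*} [Fintype Ω] [Fintype A] [Fintype B]
    (p : Ω → ℝ) (hp : ∀ ω, 0 ≤ p ω) (hps : ∑ ω, p ω = 1)
    (Dv : Ω → A) (Tv : Ω → B)
    (hT : ∀ t, 0 < pr p (fun ω => Tv ω = t))
    (xstar : A) (hx : 0 < pr p (fun ω => Dv ω = xstar))
    (habs : ∀ t, 0 < pr p (fun ω => Tv ω = t) →
      0 < cpr p (fun ω => Tv ω = t) (fun ω => Dv ω = xstar)) :
    -- expected PMI score of truthful reporting minus that of always reporting x*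
    ((∑ d, ∑ t, pr p (fun ω => Dv ω = d ∧ Tv ω = t) *
        Real.log (cpr p (fun ω => Tv ω = t) (fun ω => Dv ω = d) /
          pr p (fun ω => Tv ω = t))) -
      (∑ t, pr p (fun ω => Tv ω = t) *
        Real.log (cpr p (fun ω => Tv ω = t) (fun ω => Dv ω = xstar) /
          pr p (fun ω => Tv ω = t))) =
      ∑ d, pr p (fun ω => Dv ω = d) *
        klD (fun t => cpr p (fun ω => Tv ω = t) (fun ω => Dv ω = d))
          (fun t => cpr p (fun ω => Tv ω = t) (fun ω => Dv ω = xstar))) ∧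
    0 ≤ ∑ d, pr p (fun ω => Dv ω = d) *
        klD (fun t => cpr p (fun ω => Tv ω = t) (fun ω => Dv ω = d))
          (fun t => cpr p (fun ω => Tv ω = t) (fun ω => Dv ω = xstar)) := by
  classical
  -- conditional probability as quotient of joint (with swapped conjunction)
  have hCeq : ∀ (d : A) (t : B), cpr p (fun ω => Tv ω = t) (fun ω => Dv ω = d)
      = pr p (fun ω => Dv ω = d ∧ Tv ω = t) / pr p (fun ω => Dv ω = d) := by
    intro d t
    unfold cpr
    congr 1
    unfold pr
    refine Finset.sum_congr rfl fun ω _ => ?_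
    by_cases h1 : Tv ω = t <;> by_cases h2 : Dv ω = d <;> simp [h1, h2]
  have hJ0 : ∀ (d : A) (t : B), 0 ≤ pr p (fun ω => Dv ω = d ∧ Tv ω = t) :=
    fun d t => pr_nonneg' hp _
  have hJle : ∀ (d : A) (t : B), pr p (fun ω => Dv ω = d ∧ Tv ω = t)
      ≤ pr p (fun ω => Dv ω = d) := fun d t => pr_mono' hp _ _
  -- marginals
  have hmargD : ∀ t : B, ∑ d, pr p (fun ω => Dv ω = d ∧ Tv ω = t)
      = pr p (fun ω => Tv ω = t) := by
    intro t
    unfold pr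
    rw [Finset.sum_comm]
    refine Finset.sum_congr rfl fun ω _ => ?_
    by_cases h : Tv ω = t <;> simp [h]
  have hmargT : ∀ d : A, ∑ t, pr p (fun ω => Dv ω = d ∧ Tv ω = t)
      = pr p (fun ω => Dv ω = d) := by
    intro d
    unfold pr
    rw [Finset.sum_comm]
    refine Finset.sum_congr rfl fun ω _ => ?_
    by_cases h : Dv ω = d <;> simp [h]
  -- chain rule: P(d) * P(t|d) = P(d,t)
  have hPdC : ∀ (d : A) (t : B), pr p (fun ω => Dv ω = d) *
      cpr p (fun ω => Tv ω = t) (fun ω => Dv ω = d)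
      = pr p (fun ω => Dv ω = d ∧ Tv ω = t) := by
    intro d t
    rw [hCeq]
    by_cases hd : pr p (fun ω => Dv ω = d) = 0
    · have : pr p (fun ω => Dv ω = d ∧ Tv ω = t) = 0 :=
        le_antisymm (hd ▸ hJle d t) (hJ0 d t)
      simp [hd, this]
    · field_simp
  -- pointwise identity for the equality part
  have heq : ∀ (d : A) (t : B),
      pr p (fun ω => Dv ω = d ∧ Tv ω = t) *
        Real.log (cpr p (fun ω => Tv ω = t) (fun ω => Dv ω = d) /
          pr p (fun ω => Tv ω = t))
      - pr p (fun ω => Dv ω = d ∧ Tv ω = t) *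
        Real.log (cpr p (fun ω => Tv ω = t) (fun ω => Dv ω = xstar) /
          pr p (fun ω => Tv ω = t))
      = if 0 < cpr p (fun ω => Tv ω = t) (fun ω => Dv ω = d) then
          pr p (fun ω => Dv ω = d ∧ Tv ω = t) *
          Real.log (cpr p (fun ω => Tv ω = t) (fun ω => Dv ω = d) /
            cpr p (fun ω => Tv ω = t) (fun ω => Dv ω = xstar)) else 0 := by
    intro d t
    by_cases hJ : 0 < pr p (fun ω => Dv ω = d ∧ Tv ω = t)
    · have hPd : 0 < pr p (fun ω => Dv ω = d) := lt_of_lt_of_le hJ (hJle d t)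
      have hC : 0 < cpr p (fun ω => Tv ω = t) (fun ω => Dv ω = d) := by
        rw [hCeq]; exact div_pos hJ hPd
      have hCx : 0 < cpr p (fun ω => Tv ω = t) (fun ω => Dv ω = xstar) := habs t (hT t)
      have hPt := hT t
      rw [if_pos hC, ← mul_sub]
      congr 1
      rw [Real.log_div hC.ne' hPt.ne', Real.log_div hCx.ne' hPt.ne',
        Real.log_div hC.ne' hCx.ne']
      ring
    · have hJz : pr p (fun ω => Dv ω = d ∧ Tv ω = t) = 0 :=
        le_antisymm (not_lt.mp hJ) (hJ0 d t)
      have hC0 : cpr p (fun ω => Tv ω = t) (fun ω => Dv ω = d) = 0 := by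
        rw [hCeq, hJz, zero_div]
      rw [if_neg (by rw [hC0]; exact lt_irrefl 0), hJz]
      ring
  constructor
  · -- the equality
    have h1 : (∑ t, pr p (fun ω => Tv ω = t) *
          Real.log (cpr p (fun ω => Tv ω = t) (fun ω => Dv ω = xstar) /
            pr p (fun ω => Tv ω = t)))
        = ∑ d, ∑ t, pr p (fun ω => Dv ω = d ∧ Tv ω = t) *
          Real.log (cpr p (fun ω => Tv ω = t) (fun ω => Dv ω = xstar) /
            pr p (fun ω => Tv ω = t)) := by
      rw [Finset.sum_comm]
      refine Finset.sum_congr rfl fun t _ => ?_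
      rw [← hmargD t, Finset.sum_mul]
    rw [h1, ← Finset.sum_sub_distrib]
    refine Finset.sum_congr rfl fun d _ => ?_
    rw [← Finset.sum_sub_distrib]
    unfold klD
    rw [Finset.mul_sum]
    refine Finset.sum_congr rfl fun t _ => ?_
    rw [heq d t, mul_ite, mul_zero]
    by_cases hC : 0 < cpr p (fun ω => Tv ω = t) (fun ω => Dv ω = d)
    · rw [if_pos hC, if_pos hC, ← mul_assoc, hPdC d t]
    · rw [if_neg hC, if_neg hC]
  · -- nonnegativity
    refine Finset.sum_nonneg fun d _ => ?_
    by_cases hd : 0 < pr p (fun ω => Dv ω = d)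
    · refine mul_nonneg hd.le (gibbs' _ _ ?_ ?_ ?_ ?_ ?_)
      · intro t
        rw [hCeq]
        exact div_nonneg (hJ0 d t) hd.le
      · intro t
        exact (habs t (hT t)).le
      · have : ∑ t, cpr p (fun ω => Tv ω = t) (fun ω => Dv ω = d)
            = ∑ t, pr p (fun ω => Dv ω = d ∧ Tv ω = t) / pr p (fun ω => Dv ω = d) :=
          Finset.sum_congr rfl fun t _ => hCeq d t
        rw [this, ← Finset.sum_div, hmargT d, div_self hd.ne']
      · have : ∑ t, cpr p (fun ω => Tv ω = t) (fun ω => Dv ω = xstar)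
            = ∑ t, pr p (fun ω => Dv ω = xstar ∧ Tv ω = t) / pr p (fun ω => Dv ω = xstar) :=
          Finset.sum_congr rfl fun t _ => hCeq xstar t
        rw [this, ← Finset.sum_div, hmargT xstar, div_self hx.ne']
      · intro t _
        exact habs t (hT t)
    · have hdz : pr p (fun ω => Dv ω = d) = 0 :=
        le_antisymm (not_lt.mp hd) (pr_nonneg' hp _)
      rw [hdz, zero_mul]
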